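/- In a symmetric monoidal closed category, if the objects X and Z are dualizable, then for all objects Y and W the smash product map ∧ : F(X, Y) ∧ F(Z, W) → F(X ∧ Z, Y ∧ W) is an isomorphism. -/

import Mathlib

open CategoryTheory MonoidalCategory MonoidalClosed

universe v u

variable {C : Type u} [Category.{v} C] [MonoidalCategory C] [SymmetricCategory C]
  [MonoidalClosed C]

/-- The functional dual `D X = F(X, S)`. -/
noncomputable def Dual (X : C) : C := (ihom X).obj (𝟙_ C)

/-- The canonical map `ν : F(X, Y) ⊗ Z ⟶ F(X, Y ⊗ Z)`, adjoint to the evaluation composite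
`X ⊗ (F(X,Y) ⊗ Z) ⟶ (X ⊗ F(X,Y)) ⊗ Z ⟶ Y ⊗ Z`. -/
noncomputable def nuMap (X Y Z : C) : (ihom X).obj Y ⊗ Z ⟶ (ihom X).obj (Y ⊗ Z) :=
  MonoidalClosed.curry ((α_ X ((ihom X).obj Y) Z).inv ≫ (((ihom.ev X).app Y) ▷ Z))

/-- `X` is dualizable if the canonical map `ν : D X ⊗ X ⟶ F(X, S ⊗ X)` is an isomorphism. -/
noncomputable def Dualizable (X : C) : Prop := IsIso (nuMap X (𝟙_ C) X)


/-- The smash product map `∧ : F(X, Y) ⊗ F(Z, W) ⟶ F(X ⊗ Z, Y ⊗ W)`, adjoint to the composite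
`(X ⊗ Z) ⊗ (F(X,Y) ⊗ F(Z,W)) ⟶ (X ⊗ F(X,Y)) ⊗ (Z ⊗ F(Z,W)) ⟶ Y ⊗ W` which interchanges the
middle two factors by the braiding and then applies `ev ⊗ ev`. -/
noncomputable def smashMap (X Y Z W : C) :
    (ihom X).obj Y ⊗ (ihom Z).obj W ⟶ (ihom (X ⊗ Z)).obj (Y ⊗ W) :=
  MonoidalClosed.curry
    (tensorμ X Z ((ihom X).obj Y) ((ihom Z).obj W) ≫ ((ihom.ev X).app Y ⊗ₘ (ihom.ev Z).app W))

section Aux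
open BraidedCategory
set_option linter.unusedSectionVars false
set_option maxHeartbeats 1000000

noncomputable def epsD (X : C) : X ⊗ Dual X ⟶ 𝟙_ C := (ihom.ev X).app (𝟙_ C)

noncomputable def coevD (X : C) (hX : Dualizable X) : 𝟙_ C ⟶ Dual X ⊗ X :=
  haveI : IsIso (nuMap X (𝟙_ C) X) := hX
  (MonoidalClosed.curry ((ρ_ X).hom ≫ (λ_ X).inv) ≫ inv (nuMap X (𝟙_ C) X) (I := hX) :
    𝟙_ C ⟶ (ihom X).obj (𝟙_ C) ⊗ X)

lemma coevD_nuMap (X : C) (hX : Dualizable X) :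
    coevD X hX ≫ nuMap X (𝟙_ C) X = MonoidalClosed.curry ((ρ_ X).hom ≫ (λ_ X).inv) := by
  haveI : IsIso (nuMap X (𝟙_ C) X) := hX
  exact (Category.assoc _ _ _).trans ((whisker_eq _
    (IsIso.inv_hom_id (f := nuMap X (𝟙_ C) X) (I := hX))).trans (Category.comp_id _))

lemma snake1 (X : C) (hX : Dualizable X) :
    X ◁ coevD X hX ≫ (α_ X (Dual X) X).inv ≫ epsD X ▷ X = (ρ_ X).hom ≫ (λ_ X).inv := by
  have h := congrArg MonoidalClosed.uncurry (coevD_nuMap X hX)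
  have e1 := MonoidalClosed.uncurry_natural_left (coevD X hX) (nuMap X (𝟙_ C) X)
  have e2 : MonoidalClosed.uncurry (nuMap X (𝟙_ C) X) =
      (α_ X ((ihom X).obj (𝟙_ C)) X).inv ≫ ((ihom.ev X).app (𝟙_ C)) ▷ X := by
    rw [nuMap, MonoidalClosed.uncurry_curry]
  have e3 := MonoidalClosed.uncurry_curry (A := X) ((ρ_ X).hom ≫ (λ_ X).inv)
  exact (e1.trans (congrArg (X ◁ coevD X hX ≫ ·) e2)).symm.trans (h.trans e3)

set_option linter.unusedSectionVars false

lemma snake2 (X : C) (hX : Dualizable X) :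
    coevD X hX ▷ Dual X ≫ (α_ (Dual X) X (Dual X)).hom ≫ Dual X ◁ epsD X
      = (λ_ (Dual X)).hom ≫ (ρ_ (Dual X)).inv := by
  have h : (λ_ (Dual X)).inv ≫ coevD X hX ▷ Dual X ≫ (α_ (Dual X) X (Dual X)).hom ≫
      Dual X ◁ epsD X ≫ (ρ_ (Dual X)).hom = 𝟙 (Dual X) := by
    apply MonoidalClosed.uncurry_injective (A := X)
    show X ◁ _ ≫ epsD X = X ◁ 𝟙 _ ≫ epsD X
    rw [MonoidalCategory.whiskerLeft_id, Category.id_comp]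
    show X ◁ _ ≫ epsD X = epsD X
    calc X ◁ ((λ_ (Dual X)).inv ≫ coevD X hX ▷ Dual X ≫ (α_ (Dual X) X (Dual X)).hom ≫
          Dual X ◁ epsD X ≫ (ρ_ (Dual X)).hom) ≫ epsD X
        = 𝟙 _ ⊗≫ (X ◁ coevD X hX) ▷ Dual X ⊗≫
            ((X ⊗ Dual X) ◁ epsD X ≫ epsD X ▷ 𝟙_ C) ⊗≫ 𝟙 _ := by monoidal
      _ = 𝟙 _ ⊗≫ (X ◁ coevD X hX) ▷ Dual X ⊗≫
            (epsD X ▷ (X ⊗ Dual X) ≫ 𝟙_ C ◁ epsD X) ⊗≫ 𝟙 _ := by rw [whisker_exchange]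
      _ = 𝟙 _ ⊗≫ ((X ◁ coevD X hX ≫ (α_ X (Dual X) X).inv ≫ epsD X ▷ X) ▷ Dual X) ⊗≫
            epsD X ⊗≫ 𝟙 _ := by monoidal
      _ = 𝟙 _ ⊗≫ (((ρ_ X).hom ≫ (λ_ X).inv) ▷ Dual X) ⊗≫ epsD X ⊗≫ 𝟙 _ := by
            rw [snake1]
      _ = epsD X := by monoidal
  rw [← cancel_epi (λ_ (Dual X)).inv, ← cancel_mono (ρ_ (Dual X)).hom]
  simpa using h

noncomputable def pairingOfDualizable (X : C) (hX : Dualizable X) : ExactPairing (Dual X) X where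
  coevaluation' := coevD X hX
  evaluation' := epsD X
  coevaluation_evaluation' := snake1 X hX
  evaluation_coevaluation' := snake2 X hX

set_option maxHeartbeats 1000000 in
noncomputable def pairingTensor (D₁ X D₂ Z : C) [ExactPairing D₁ X] [ExactPairing D₂ Z] :
    ExactPairing (D₂ ⊗ D₁) (X ⊗ Z) where
  coevaluation' := η_ D₂ Z ≫
    D₂ ◁ ((λ_ Z).inv ≫ η_ D₁ X ▷ Z ≫ (α_ D₁ X Z).hom) ≫ (α_ D₂ D₁ (X ⊗ Z)).inv
  evaluation' := (α_ X Z (D₂ ⊗ D₁)).hom ≫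
    X ◁ ((α_ Z D₂ D₁).inv ≫ ε_ D₂ Z ▷ D₁ ≫ (λ_ D₁).hom) ≫ ε_ D₁ X
  coevaluation_evaluation' := by
    calc _ = 𝟙 ((X ⊗ Z) ⊗ 𝟙_ C) ⊗≫ (X ⊗ Z) ◁ η_ D₂ Z ⊗≫
            (X ◁ ((Z ⊗ D₂) ◁ ((λ_ Z).inv ≫ η_ D₁ X ▷ Z ≫ (α_ D₁ X Z).hom)
              ≫ ε_ D₂ Z ▷ (D₁ ⊗ (X ⊗ Z)))) ⊗≫
            ε_ D₁ X ▷ (X ⊗ Z) ⊗≫ 𝟙 (𝟙_ C ⊗ (X ⊗ Z)) := by monoidal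
      _ = 𝟙 ((X ⊗ Z) ⊗ 𝟙_ C) ⊗≫ (X ⊗ Z) ◁ η_ D₂ Z ⊗≫
            (X ◁ (ε_ D₂ Z ▷ Z
              ≫ 𝟙_ C ◁ ((λ_ Z).inv ≫ η_ D₁ X ▷ Z ≫ (α_ D₁ X Z).hom))) ⊗≫
            ε_ D₁ X ▷ (X ⊗ Z) ⊗≫ 𝟙 (𝟙_ C ⊗ (X ⊗ Z)) := by rw [whisker_exchange]
      _ = 𝟙 ((X ⊗ Z) ⊗ 𝟙_ C) ⊗≫
            X ◁ (Z ◁ η_ D₂ Z ≫ (α_ Z D₂ Z).inv ≫ ε_ D₂ Z ▷ Z) ⊗≫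
            ((X ◁ η_ D₁ X ≫ (α_ X D₁ X).inv ≫ ε_ D₁ X ▷ X) ▷ Z) ⊗≫
            𝟙 (𝟙_ C ⊗ (X ⊗ Z)) := by monoidal
      _ = 𝟙 ((X ⊗ Z) ⊗ 𝟙_ C) ⊗≫
            X ◁ ((ρ_ Z).hom ≫ (λ_ Z).inv) ⊗≫
            (((ρ_ X).hom ≫ (λ_ X).inv) ▷ Z) ⊗≫
            𝟙 (𝟙_ C ⊗ (X ⊗ Z)) := by
          rw [ExactPairing.coevaluation_evaluation, ExactPairing.coevaluation_evaluation]
      _ = _ := by monoidal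
  evaluation_coevaluation' := by
    calc _ = 𝟙 (𝟙_ C ⊗ (D₂ ⊗ D₁)) ⊗≫ η_ D₂ Z ▷ (D₂ ⊗ D₁) ⊗≫
            D₂ ◁ (η_ D₁ X ▷ (Z ⊗ (D₂ ⊗ D₁))
              ≫ (D₁ ⊗ X) ◁ ((α_ Z D₂ D₁).inv ≫ ε_ D₂ Z ▷ D₁ ≫ (λ_ D₁).hom)) ⊗≫
            D₂ ◁ (D₁ ◁ ε_ D₁ X) ⊗≫ 𝟙 ((D₂ ⊗ D₁) ⊗ 𝟙_ C) := by monoidal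
      _ = 𝟙 (𝟙_ C ⊗ (D₂ ⊗ D₁)) ⊗≫ η_ D₂ Z ▷ (D₂ ⊗ D₁) ⊗≫
            D₂ ◁ (𝟙_ C ◁ ((α_ Z D₂ D₁).inv ≫ ε_ D₂ Z ▷ D₁ ≫ (λ_ D₁).hom)
              ≫ η_ D₁ X ▷ D₁) ⊗≫
            D₂ ◁ (D₁ ◁ ε_ D₁ X) ⊗≫ 𝟙 ((D₂ ⊗ D₁) ⊗ 𝟙_ C) := by rw [← whisker_exchange]
      _ = 𝟙 (𝟙_ C ⊗ (D₂ ⊗ D₁)) ⊗≫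
            ((η_ D₂ Z ▷ D₂ ≫ (α_ D₂ Z D₂).hom ≫ D₂ ◁ ε_ D₂ Z) ▷ D₁) ⊗≫
            D₂ ◁ (η_ D₁ X ▷ D₁ ≫ (α_ D₁ X D₁).hom ≫ D₁ ◁ ε_ D₁ X) ⊗≫
            𝟙 ((D₂ ⊗ D₁) ⊗ 𝟙_ C) := by monoidal
      _ = 𝟙 (𝟙_ C ⊗ (D₂ ⊗ D₁)) ⊗≫
            (((λ_ D₂).hom ≫ (ρ_ D₂).inv) ▷ D₁) ⊗≫
            D₂ ◁ ((λ_ D₁).hom ≫ (ρ_ D₁).inv) ⊗≫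
            𝟙 ((D₂ ⊗ D₁) ⊗ 𝟙_ C) := by
          rw [ExactPairing.evaluation_coevaluation, ExactPairing.evaluation_coevaluation]
      _ = _ := by monoidal

noncomputable def muMap (V D' : C) [ExactPairing D' V] (B : C) : D' ⊗ B ⟶ (ihom V).obj B :=
  MonoidalClosed.curry ((α_ V D' B).inv ≫ ε_ D' V ▷ B ≫ (λ_ B).hom)

lemma comp_muMap {V D' : C} [ExactPairing D' V] {A B : C} (h : A ⟶ D' ⊗ B) :
    h ≫ muMap V D' B = MonoidalClosed.curry ((tensorLeftHomEquiv A D' V B).symm h) := by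
  rw [muMap, ← MonoidalClosed.curry_natural_left]
  rfl

instance muMap_isIso (V D' : C) [ExactPairing D' V] (B : C) : IsIso (muMap V D' B) := by
  apply isIso_of_yoneda_map_bijective
  intro A
  constructor
  · intro h₁ h₂ e
    have e' : h₁ ≫ muMap V D' B = h₂ ≫ muMap V D' B := e
    rw [comp_muMap, comp_muMap] at e'
    replace e := e'
    exact (tensorLeftHomEquiv A D' V B).symm.injective (MonoidalClosed.curry_injective e)
  · intro g
    refine ⟨(tensorLeftHomEquiv A D' V B) (MonoidalClosed.uncurry g), ?_⟩
    show (tensorLeftHomEquiv A D' V B) (MonoidalClosed.uncurry g) ≫ muMap V D' B = g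
    rw [comp_muMap, Equiv.symm_apply_apply, MonoidalClosed.curry_uncurry]

lemma swap_eval {Z D : C} (e : Z ⊗ D ⟶ 𝟙_ C) (A : C) :
    (β_ Z A).hom ▷ D ≫ (α_ A Z D).hom ≫ A ◁ e =
    (α_ Z A D).hom ≫ Z ◁ (β_ A D).hom ≫ (α_ Z D A).inv ≫ e ▷ A ≫
      (λ_ A).hom ≫ (ρ_ A).inv := by
  have h : A ◁ e = (β_ A (Z ⊗ D)).hom ≫ e ▷ A ≫ (λ_ A).hom ≫ (ρ_ A).inv := by
    rw [← braiding_naturality_right_assoc A e]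
    simp [braiding_tensorUnit_right]
  rw [h, braiding_tensor_right_hom]
  simp
  rw [← comp_whiskerRight_assoc, SymmetricCategory.symmetry]
  simp

end Aux

set_option maxHeartbeats 1000000 in
/-- if `X` and `Z` are dualizable, then for all `Y W` the smash product map
`F(X, Y) ⊗ F(Z, W) ⟶ F(X ⊗ Z, Y ⊗ W)` is an isomorphism. -/
theorem statement3 (X Z : C) (hX : Dualizable X) (hZ : Dualizable Z) (Y W : C) :
    IsIso (smashMap X Y Z W) := by
  letI p₁ : ExactPairing (Dual X) X := pairingOfDualizable X hX
  letI p₂ : ExactPairing (Dual Z) Z := pairingOfDualizable Z hZ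
  letI P : ExactPairing (Dual Z ⊗ Dual X) (X ⊗ Z) := pairingTensor (Dual X) X (Dual Z) Z
  have hev : ε_ (Dual Z ⊗ Dual X) (X ⊗ Z) = (α_ X Z (Dual Z ⊗ Dual X)).hom ≫
      X ◁ ((α_ Z (Dual Z) (Dual X)).inv ≫ ε_ (Dual Z) Z ▷ Dual X ≫ (λ_ (Dual X)).hom) ≫
      ε_ (Dual X) X := rfl
  have key : (muMap X (Dual X) Y ⊗ₘ muMap Z (Dual Z) W) ≫ smashMap X Y Z W =
      ((α_ (Dual X ⊗ Y) (Dual Z) W).inv ≫ (β_ (Dual X ⊗ Y) (Dual Z)).hom ▷ W ≫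
        (α_ (Dual Z) (Dual X ⊗ Y) W).hom ≫ Dual Z ◁ (α_ (Dual X) Y W).hom ≫
        (α_ (Dual Z) (Dual X) (Y ⊗ W)).inv) ≫ muMap (X ⊗ Z) (Dual Z ⊗ Dual X) (Y ⊗ W) := by
    apply MonoidalClosed.uncurry_injective (A := X ⊗ Z)
    have hu' : MonoidalClosed.uncurry (muMap (X ⊗ Z) (Dual Z ⊗ Dual X) (Y ⊗ W)) =
        (α_ (X ⊗ Z) (Dual Z ⊗ Dual X) (Y ⊗ W)).inv ≫
          ε_ (Dual Z ⊗ Dual X) (X ⊗ Z) ▷ (Y ⊗ W) ≫ (λ_ (Y ⊗ W)).hom := by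
      rw [muMap, MonoidalClosed.uncurry_curry]
    rw [MonoidalClosed.uncurry_natural_left, MonoidalClosed.uncurry_natural_left,
      smashMap, MonoidalClosed.uncurry_curry, hu']
    have hu₁ : X ◁ muMap X (Dual X) Y ≫ (ihom.ev X).app Y =
        (α_ X (Dual X) Y).inv ≫ ε_ (Dual X) X ▷ Y ≫ (λ_ Y).hom := by
      rw [← MonoidalClosed.uncurry_eq, muMap, MonoidalClosed.uncurry_curry]
    have hu₂ : Z ◁ muMap Z (Dual Z) W ≫ (ihom.ev Z).app W =
        (α_ Z (Dual Z) W).inv ≫ ε_ (Dual Z) Z ▷ W ≫ (λ_ W).hom := by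
      rw [← MonoidalClosed.uncurry_eq, muMap, MonoidalClosed.uncurry_curry]
    rw [tensorμ_natural_right_assoc, tensorHom_comp_tensorHom, hu₁, hu₂, hev]
    calc tensorμ X Z (Dual X ⊗ Y) (Dual Z ⊗ W) ≫
          (((α_ X (Dual X) Y).inv ≫ ε_ (Dual X) X ▷ Y ≫ (λ_ Y).hom) ⊗ₘ
            ((α_ Z (Dual Z) W).inv ≫ ε_ (Dual Z) Z ▷ W ≫ (λ_ W).hom))
        = 𝟙 _ ⊗≫
            X ◁ (((β_ Z (Dual X ⊗ Y)).hom ▷ Dual Z ≫ (α_ (Dual X ⊗ Y) Z (Dual Z)).hom ≫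
              (Dual X ⊗ Y) ◁ ε_ (Dual Z) Z) ▷ W) ⊗≫
            (((α_ X (Dual X) Y).inv ≫ ε_ (Dual X) X ▷ Y ≫ (λ_ Y).hom) ▷ W) ⊗≫ 𝟙 _ := by
          rw [tensorμ, tensorHom_def']; monoidal
      _ = 𝟙 _ ⊗≫
            X ◁ ((((α_ Z (Dual X ⊗ Y) (Dual Z)).hom ≫ Z ◁ (β_ (Dual X ⊗ Y) (Dual Z)).hom ≫
              (α_ Z (Dual Z) (Dual X ⊗ Y)).inv ≫ ε_ (Dual Z) Z ▷ (Dual X ⊗ Y) ≫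
              (λ_ (Dual X ⊗ Y)).hom ≫ (ρ_ (Dual X ⊗ Y)).inv)) ▷ W) ⊗≫
            (((α_ X (Dual X) Y).inv ≫ ε_ (Dual X) X ▷ Y ≫ (λ_ Y).hom) ▷ W) ⊗≫ 𝟙 _ := by
          rw [swap_eval]
      _ = _ := by monoidal
  have h2 : IsIso ((muMap X (Dual X) Y ⊗ₘ muMap Z (Dual Z) W) ≫ smashMap X Y Z W) := by
    rw [key]; infer_instance
  exact IsIso.of_isIso_comp_left (muMap X (Dual X) Y ⊗ₘ muMap Z (Dual Z) W) (smashMap X Y Z W)
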